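/- Let (Ω, P) be a probability space, n ≥ 2, x : Fin n → ℝ with SS_x = ∑_i (x_i − x̄)² > 0, let T, b ∈ ℝ, σ > 0, and let ε_1,…,ε_n be independent real random variables each with law the Gaussian measure of mean 0 and variance σ². Define y_i = T·x_i + b + ε_i and T̂ = ∑_i (x_i − x̄)(y_i − ȳ)/SS_x. Then the law of T̂ is the Gaussian measure on ℝ of mean T and variance σ²/SS_x. -/

import Mathlib

open MeasureTheory ProbabilityTheory Real
open scoped NNReal ENNReal


lemma sqrt_const_eq (a₁ a₂ : ℝ) (h₁ : 0 < a₁) (h₂ : 0 < a₂) :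
    (√(2 * π * a₁))⁻¹ * (√(2 * π * a₂))⁻¹ * √(π / ((a₁ + a₂) / (2 * a₁ * a₂)))
      = (√(2 * π * (a₁ + a₂)))⁻¹ := by
  have hπ := pi_pos
  rw [← Real.sqrt_inv, ← Real.sqrt_inv, ← Real.sqrt_inv,
    ← Real.sqrt_mul (by positivity), ← Real.sqrt_mul (by positivity)]
  congr 1
  field_simp

lemma gaussianPDFReal_conv (μ₁ μ₂ : ℝ) (v₁ v₂ : ℝ≥0) (h₁ : v₁ ≠ 0) (h₂ : v₂ ≠ 0) (z : ℝ) :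
    ∫ t, gaussianPDFReal μ₁ v₁ t * gaussianPDFReal μ₂ v₂ (z - t)
      = gaussianPDFReal (μ₁ + μ₂) (v₁ + v₂) z := by
  have ha₁ : (0:ℝ) < (v₁:ℝ) := by positivity
  have ha₂ : (0:ℝ) < (v₂:ℝ) := by positivity
  set a₁ := (v₁ : ℝ) with ha1def
  set a₂ := (v₂ : ℝ) with ha2def
  set c : ℝ := z - μ₁ - μ₂ with hc
  set bb : ℝ := (a₁ + a₂) / (2 * a₁ * a₂) with hbb
  set m : ℝ := μ₁ + a₁ * c / (a₁ + a₂) with hm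
  have hbbpos : 0 < bb := by rw [hbb]; positivity
  have key : ∀ t : ℝ, gaussianPDFReal μ₁ v₁ t * gaussianPDFReal μ₂ v₂ (z - t)
      = ((√(2*π*a₁))⁻¹ * (√(2*π*a₂))⁻¹ * rexp (-c^2 / (2*(a₁+a₂)))) * rexp (-bb * (t - m)^2) := by
    intro t
    simp only [gaussianPDFReal, ← ha1def, ← ha2def]
    rw [mul_mul_mul_comm, ← Real.exp_add, mul_assoc ((√(2*π*a₁))⁻¹ * (√(2*π*a₂))⁻¹),
      ← Real.exp_add]
    congr 2
    rw [hm, hbb, hc]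
    field_simp
    ring
  rw [integral_congr_ae (ae_of_all _ key), integral_const_mul,
    integral_sub_right_eq_self (fun t => rexp (-bb * t^2)) m, integral_gaussian]
  rw [gaussianPDFReal]
  push_cast
  rw [← ha1def, ← ha2def, mul_right_comm, hbb, sqrt_const_eq a₁ a₂ ha₁ ha₂]
  have : z - (μ₁ + μ₂) = c := by rw [hc]; ring
  rw [this]

lemma dirac_conv_eq (a : ℝ) (ν : Measure ℝ) [SFinite ν] :
    Measure.conv (Measure.dirac a) ν = ν.map (a + ·) := by
  show Measure.map (fun p : ℝ × ℝ => p.1 + p.2) ((Measure.dirac a).prod ν) = _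
  rw [Measure.dirac_prod, Measure.map_map measurable_add measurable_prodMk_left]
  rfl

lemma gaussianPDFReal_le (μ : ℝ) (v : ℝ≥0) (x : ℝ) :
    gaussianPDFReal μ v x ≤ (√(2 * π * v))⁻¹ := by
  rw [gaussianPDFReal]
  have h1 : rexp (-(x - μ) ^ 2 / (2 * v)) ≤ 1 := by
    rw [Real.exp_le_one_iff]
    apply div_nonpos_of_nonpos_of_nonneg
    · simp [sq_nonneg]
    · positivity
  calc (√(2 * π * v))⁻¹ * rexp (-(x - μ) ^ 2 / (2 * v)) ≤ (√(2 * π * v))⁻¹ * 1 :=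
        mul_le_mul_of_nonneg_left h1 (by positivity)
    _ = (√(2 * π * v))⁻¹ := mul_one _

lemma conv_compute {f₁ f₂ g : ℝ → ℝ≥0∞} (h1m : Measurable f₁) (h2m : Measurable f₂)
    (hgm : Measurable g) :
    ∫⁻ x, (∫⁻ z, f₂ (z - x) * g z) ∂(volume.withDensity f₁)
      = ∫⁻ z, (∫⁻ x, f₁ x * f₂ (z - x)) * g z := by
  have hMg : Measurable fun x : ℝ => ∫⁻ z, f₂ (z - x) * g z :=
    Measurable.lintegral_prod_right'
      ((h2m.comp (measurable_snd.sub measurable_fst)).mul (hgm.comp measurable_snd))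
  calc ∫⁻ x, (∫⁻ z, f₂ (z - x) * g z) ∂(volume.withDensity f₁)
      = ∫⁻ x, (f₁ * fun x => ∫⁻ z, f₂ (z - x) * g z) x :=
        lintegral_withDensity_eq_lintegral_mul volume h1m hMg
    _ = ∫⁻ x, ∫⁻ z, f₁ x * (f₂ (z - x) * g z) :=
        lintegral_congr fun x => by
          simp only [Pi.mul_apply]
          exact (lintegral_const_mul'' (f₁ x) (f := fun z => f₂ (z - x) * g z)
            (((h2m.comp (measurable_id.sub measurable_const)).mul hgm).aemeasurable)).symm
    _ = ∫⁻ z, ∫⁻ x, f₁ x * (f₂ (z - x) * g z) :=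
        lintegral_lintegral_swap ((h1m.comp measurable_fst).mul
          ((h2m.comp (measurable_snd.sub measurable_fst)).mul (hgm.comp measurable_snd))).aemeasurable
    _ = ∫⁻ z, (∫⁻ x, f₁ x * f₂ (z - x)) * g z :=
        lintegral_congr fun z => by
          simp_rw [← mul_assoc]
          exact lintegral_mul_const'' (g z) (f := fun x => f₁ x * f₂ (z - x))
            ((h1m.mul (h2m.comp (measurable_const.sub measurable_id))).aemeasurable)

set_option maxHeartbeats 1000000 in
lemma gaussianReal_conv (μ₁ μ₂ : ℝ) (v₁ v₂ : ℝ≥0) :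
    Measure.conv (gaussianReal μ₁ v₁) (gaussianReal μ₂ v₂) = gaussianReal (μ₁ + μ₂) (v₁ + v₂) := by
  by_cases h₁ : v₁ = 0
  · subst h₁
    rw [gaussianReal_zero_var, dirac_conv_eq, gaussianReal_map_const_add,
      add_comm μ₂ μ₁, zero_add]
  by_cases h₂ : v₂ = 0
  · subst h₂
    rw [Measure.conv_comm, gaussianReal_zero_var, dirac_conv_eq, gaussianReal_map_const_add, add_zero]
  · have h12 : v₁ + v₂ ≠ 0 := fun h => h₁ (by simpa using (add_eq_zero.mp h).1)
    have hkey : ∀ t : ℝ, ∫⁻ x, gaussianPDF μ₁ v₁ x * gaussianPDF μ₂ v₂ (t - x)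
        = gaussianPDF (μ₁ + μ₂) (v₁ + v₂) t := by
      intro t
      have hbd : ∀ x : ℝ, ‖gaussianPDFReal μ₂ v₂ (t - x)‖ ≤ (√(2 * π * v₂))⁻¹ := fun x => by
        rw [Real.norm_eq_abs, abs_of_nonneg (gaussianPDFReal_nonneg _ _ _)]
        exact gaussianPDFReal_le _ _ _
      have hint : Integrable (fun x => gaussianPDFReal μ₁ v₁ x * gaussianPDFReal μ₂ v₂ (t - x)) := by
        have := (integrable_gaussianPDFReal μ₁ v₁).bdd_mul
          (((measurable_gaussianPDFReal μ₂ v₂).comp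
            (measurable_const.sub measurable_id)).aestronglyMeasurable)
          (ae_of_all _ hbd)
        simpa [mul_comm, Function.comp_def] using this
      simp_rw [gaussianPDF, ← ENNReal.ofReal_mul (gaussianPDFReal_nonneg μ₁ v₁ _)]
      rw [← ofReal_integral_eq_lintegral_ofReal hint
        (ae_of_all _ fun x => mul_nonneg (gaussianPDFReal_nonneg _ _ _)
          (gaussianPDFReal_nonneg _ _ _)),
        gaussianPDFReal_conv μ₁ μ₂ v₁ v₂ h₁ h₂ t]
    rw [gaussianReal_of_var_ne_zero _ h₁, gaussianReal_of_var_ne_zero _ h₂,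
      gaussianReal_of_var_ne_zero _ h12]
    have h2m : Measurable (gaussianPDF μ₂ v₂) := measurable_gaussianPDF _ _
    have h1m : Measurable (gaussianPDF μ₁ v₁) := measurable_gaussianPDF _ _
    ext s hs
    have hindm : Measurable (s.indicator (1 : ℝ → ℝ≥0∞)) := measurable_one.indicator hs
    show Measure.map (fun p : ℝ × ℝ => p.1 + p.2) _ s = _
    rw [Measure.map_apply measurable_add hs, withDensity_apply _ hs,
      ← lintegral_indicator_one (measurable_add hs),
      lintegral_prod _ ((measurable_one.indicator (measurable_add hs)).aemeasurable)]
    have step1 : ∀ x : ℝ, (∫⁻ y, ((fun p : ℝ × ℝ => p.1 + p.2) ⁻¹' s).indicator 1 (x, y)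
        ∂(volume.withDensity (gaussianPDF μ₂ v₂)))
        = ∫⁻ z, gaussianPDF μ₂ v₂ (z - x) * s.indicator 1 z := by
      intro x
      calc (∫⁻ y, ((fun p : ℝ × ℝ => p.1 + p.2) ⁻¹' s).indicator 1 (x, y)
            ∂(volume.withDensity (gaussianPDF μ₂ v₂)))
          = ∫⁻ y, (gaussianPDF μ₂ v₂ * fun y => s.indicator (1 : ℝ → ℝ≥0∞) (x + y)) y := by
            have hcv : ∀ y : ℝ, ((fun p : ℝ × ℝ => p.1 + p.2) ⁻¹' s).indicator
                (1 : ℝ × ℝ → ℝ≥0∞) (x, y) = s.indicator (1 : ℝ → ℝ≥0∞) (x + y) := fun y => rfl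
            simp_rw [hcv]
            exact lintegral_withDensity_eq_lintegral_mul volume h2m
              (g := fun y => s.indicator 1 (x + y))
              (hindm.comp (measurable_const.add measurable_id))
        _ = ∫⁻ y, (fun z => gaussianPDF μ₂ v₂ (z - x) * s.indicator 1 z) (y + x) := by
            congr 1
            ext y
            simp only [Pi.mul_apply, add_sub_cancel_right]
            rw [add_comm x y]
        _ = ∫⁻ z, gaussianPDF μ₂ v₂ (z - x) * s.indicator 1 z :=
            lintegral_add_right_eq_self
              (fun z => gaussianPDF μ₂ v₂ (z - x) * s.indicator 1 z) x
    simp_rw [step1]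
    rw [conv_compute h1m h2m hindm]
    simp_rw [hkey]
    rw [← lintegral_indicator hs]
    exact lintegral_congr fun z => by
      by_cases hz : z ∈ s <;>
        simp [Set.indicator_of_mem, Set.indicator_of_notMem, hz]

lemma gaussianReal_add_rv {Ω : Type*} [MeasurableSpace Ω] {P : Measure Ω} [IsProbabilityMeasure P]
    {X Y : Ω → ℝ} (hX : Measurable X) (hY : Measurable Y) (h : IndepFun X Y P)
    {μ₁ μ₂ : ℝ} {v₁ v₂ : ℝ≥0} (h1 : P.map X = gaussianReal μ₁ v₁)
    (h2 : P.map Y = gaussianReal μ₂ v₂) :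
    P.map (X + Y) = gaussianReal (μ₁ + μ₂) (v₁ + v₂) := by
  have hprod : P.map (fun ω => (X ω, Y ω)) = (P.map X).prod (P.map Y) :=
    (indepFun_iff_map_prod_eq_prod_map_map hX.aemeasurable hY.aemeasurable).mp h
  have hmm : P.map (X + Y)
      = Measure.map (fun p : ℝ × ℝ => p.1 + p.2) (P.map fun ω => (X ω, Y ω)) := by
    rw [Measure.map_map measurable_add (hX.prodMk hY)]
    rfl
  rw [hmm, hprod, h1, h2, ← gaussianReal_conv]
  rfl

lemma gaussianReal_sum_rv {Ω : Type*} [MeasurableSpace Ω] {P : Measure Ω}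
    [IsProbabilityMeasure P] {ι : Type*} {X : ι → Ω → ℝ} (hmeas : ∀ i, Measurable (X i))
    (hindep : iIndepFun X P)
    (μ : ι → ℝ) (v : ι → ℝ≥0) (hlaw : ∀ i, P.map (X i) = gaussianReal (μ i) (v i))
    (s : Finset ι) :
    P.map (∑ i ∈ s, X i) = gaussianReal (∑ i ∈ s, μ i) (∑ i ∈ s, v i) := by
  classical
  induction s using Finset.induction_on with
  | empty =>
      simp only [Finset.sum_empty]
      rw [show ((0 : Ω → ℝ)) = fun _ => (0 : ℝ) from rfl, Measure.map_const,
        measure_univ, one_smul, gaussianReal_zero_var]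
  | insert j s' hj ih =>
      have hYm : Measurable (∑ i ∈ s', X i) := by
        have h := Finset.measurable_sum s' fun i _ => hmeas i
        have he : (∑ i ∈ s', X i) = fun a => ∑ i ∈ s', X i a := by
          ext a
          simp
        rw [he]
        exact h
      rw [Finset.sum_insert hj, Finset.sum_insert hj, Finset.sum_insert hj]
      exact gaussianReal_add_rv (hmeas j) hYm
        (hindep.indepFun_finsetSum_of_notMem hmeas hj).symm (hlaw j) ih


/-- With i.i.d. Gaussian noise `ε i ~ N(0, σ²)`, the OLS slope estimator
is Gaussian: `T̂ ~ N(T, σ²/SSx)`. -/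
theorem ols_slope_gaussian_law
    {Ω : Type*} [MeasurableSpace Ω] (P : Measure Ω) [IsProbabilityMeasure P]
    (n : ℕ) (hn : 2 ≤ n) (x : Fin n → ℝ)
    (xbar SSx : ℝ)
    (hxbar : xbar = (∑ i, x i) / n)
    (hSSx : SSx = ∑ i, (x i - xbar) ^ 2)
    (hSSx_pos : 0 < SSx)
    (T b σ : ℝ) (hσ : 0 < σ)
    (ε : Fin n → Ω → ℝ)
    (hmeas : ∀ i, Measurable (ε i))
    (hindep : iIndepFun ε P)
    (hlaw : ∀ i, Measure.map (ε i) P = gaussianReal 0 ((σ ^ 2).toNNReal))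
    (y : Fin n → Ω → ℝ)
    (hy : ∀ i ω, y i ω = T * x i + b + ε i ω)
    (That : Ω → ℝ)
    (hThat : ∀ ω, That ω =
        (∑ i, (x i - xbar) * (y i ω - (∑ j, y j ω) / n)) / SSx) :
    Measure.map That P = gaussianReal T ((σ ^ 2 / SSx).toNNReal) := by
  have hn0 : (0:ℝ) < (n : ℝ) := by
    have : 0 < n := by omega
    exact_mod_cast this
  have hSSne : SSx ≠ 0 := ne_of_gt hSSx_pos
  set c : Fin n → ℝ := fun i => (x i - xbar) / SSx with hc
  have hsum0 : ∑ i, (x i - xbar) = 0 := by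
    rw [Finset.sum_sub_distrib, Finset.sum_const, Finset.card_univ, Fintype.card_fin, hxbar, nsmul_eq_mul]
    field_simp
    ring
  have hThat' : That = fun ω => (∑ i, c i * ε i ω) + T := by
    funext ω
    rw [hThat]
    have hysum : ∑ j, y j ω = T * (∑ j, x j) + n * b + ∑ j, ε j ω := by
      simp only [hy]
      rw [Finset.sum_add_distrib, Finset.sum_add_distrib, ← Finset.mul_sum,
        Finset.sum_const, Finset.card_univ, Fintype.card_fin, nsmul_eq_mul]
    have hybar : (∑ j, y j ω) / n = T * xbar + b + (∑ j, ε j ω) / n := by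
      rw [hysum, hxbar]
      field_simp
    rw [hybar]
    have hterm : ∀ i, (x i - xbar) * (y i ω - (T * xbar + b + (∑ j, ε j ω) / n))
        = T * (x i - xbar) ^ 2 + (x i - xbar) * ε i ω
          - ((∑ j, ε j ω) / n) * (x i - xbar) := by
      intro i
      rw [hy]
      ring
    rw [Finset.sum_congr rfl fun i _ => hterm i, Finset.sum_sub_distrib,
      Finset.sum_add_distrib, ← Finset.mul_sum, ← Finset.mul_sum, hsum0, mul_zero, sub_zero,
      ← hSSx, add_div, Finset.sum_div, mul_div_assoc, div_self hSSne, mul_one]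
    rw [add_comm]
    congr 1
    exact Finset.sum_congr rfl fun i _ => by rw [hc]; ring
  set v : ℝ≥0 := (σ ^ 2).toNNReal with hv
  have hmeasX : ∀ i, Measurable fun ω => c i * ε i ω := fun i => (hmeas i).const_mul _
  have hiX : iIndepFun (fun i => fun ω => c i * ε i ω) P :=
    hindep.comp (fun i => (c i * ·)) (fun i => measurable_id.const_mul (c i))
  have hXlaw : ∀ i, P.map (fun ω => c i * ε i ω)
      = gaussianReal 0 (⟨(c i) ^ 2, sq_nonneg _⟩ * v) := by
    intro i
    have h1 : (P.map (ε i)).map (c i * ·) = P.map (fun ω => c i * ε i ω) :=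
      Measure.map_map (measurable_id.const_mul (c i)) (hmeas i)
    rw [← h1, hlaw i, gaussianReal_map_const_mul, mul_zero]
    rfl
  have hsum := gaussianReal_sum_rv hmeasX hiX (fun _ => (0:ℝ))
    (fun i => ⟨(c i) ^ 2, sq_nonneg _⟩ * v) hXlaw Finset.univ
  have hmeasS : Measurable (∑ i : Fin n, fun ω => c i * ε i ω) := by
    have he : (∑ i : Fin n, fun ω => c i * ε i ω) = fun ω => ∑ i, c i * ε i ω := by
      ext ω
      simp
    rw [he]
    exact Finset.measurable_sum _ fun i _ => hmeasX i
  have hfun : That = (fun z => z + T) ∘ (∑ i : Fin n, fun ω : Ω => c i * ε i ω) := by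
    rw [hThat']
    funext ω
    simp
  rw [hfun, ← Measure.map_map (measurable_add_const T) hmeasS, hsum,
    gaussianReal_map_add_const]
  congr 1
  · simp
  · -- variance equality
    apply NNReal.coe_injective
    push_cast
    rw [Real.coe_toNNReal _ (le_of_lt (div_pos (by positivity) hSSx_pos))]
    have hvc : ((v : ℝ≥0) : ℝ) = σ ^ 2 := Real.coe_toNNReal _ (by positivity)
    calc (∑ i, ((c i) ^ 2 * (v : ℝ))) = (∑ i, (c i) ^ 2) * σ ^ 2 := by
          rw [← Finset.sum_mul, hvc]
      _ = (1 / SSx) * σ ^ 2 := by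
          congr 1
          have : ∀ i : Fin n, (c i) ^ 2 = (x i - xbar) ^ 2 / SSx ^ 2 := fun i => by
            rw [hc]
            ring
          rw [Finset.sum_congr rfl fun i _ => this i, ← Finset.sum_div, ← hSSx]
          field_simp
      _ = σ ^ 2 / SSx := by ring
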